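/- Let e be an idempotent of a ring R. If R is SSP, then the corner ring eRe is also SSP: for any two idempotents f, g of eRe, fS + gS is a direct summand of S as a right S-module, where S = eRe. -/

import Mathlib

def IsSummand {R M : Type*} [Ring R] [AddCommGroup M] [Module R M]
    (p : Submodule R M) : Prop :=
  ∃ q : Submodule R M, IsCompl p q

/-- The corner `eRe` of a ring `R`, as a non-unital subring. -/
def corner {R : Type*} [Ring R] (e : R) : NonUnitalSubring R where
  carrier := {x : R | ∃ r : R, x = e * r * e}
  add_mem' := by rintro a b ⟨r, rfl⟩ ⟨s, rfl⟩; exact ⟨r + s, by noncomm_ring⟩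
  zero_mem' := ⟨0, by simp⟩
  neg_mem' := by rintro a ⟨r, rfl⟩; exact ⟨-r, by noncomm_ring⟩
  mul_mem' := by rintro a b ⟨r, rfl⟩ ⟨s, rfl⟩; exact ⟨r * e * e * s, by noncomm_ring⟩

/-- If `e` is an idempotent, the corner `eRe` is a ring with identity `e`. -/
def cornerRing {R : Type*} [Ring R] {e : R} (he : IsIdempotentElem e) :
    Ring (corner e) :=
  { (inferInstance : NonUnitalRing (corner e)) with
    one := ⟨e, 1, by rw [mul_one, he.eq]⟩
    one_mul := by
      rintro ⟨x, r, rfl⟩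
      ext
      show e * (e * r * e) = e * r * e
      simp only [← mul_assoc]
      rw [he.eq]
    mul_one := by
      rintro ⟨x, r, rfl⟩
      ext
      show e * r * e * e = e * r * e
      rw [mul_assoc, he.eq] }

open MulOpposite in
lemma mem_span_idem' {R : Type*} [Ring R] (a r : R) :
    a * r ∈ Submodule.span Rᵐᵒᵖ {a} :=
  Submodule.mem_span_singleton.2 ⟨op r, op_smul_eq_mul _ _⟩

open MulOpposite in
lemma idem_summand {R : Type*} [Ring R] {a : R} (ha : IsIdempotentElem a) :
    IsSummand (Submodule.span Rᵐᵒᵖ {a}) := by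
  refine ⟨Submodule.span Rᵐᵒᵖ {1 - a}, ?_, ?_⟩
  · rw [Submodule.disjoint_def]
    intro x hx hx'
    obtain ⟨r, rfl⟩ := Submodule.mem_span_singleton.1 hx
    obtain ⟨s, hs⟩ := Submodule.mem_span_singleton.1 hx'
    have h1 : a * (r • a) = r • a := by
      rw [smul_eq_mul_unop, ← mul_assoc, ha.eq]
    have h2 : a * ((1 - a) * unop s) = 0 := by
      rw [← mul_assoc, mul_sub, mul_one, ha.eq, sub_self, zero_mul]
    rw [← hs, smul_eq_mul_unop] at h1
    rw [← hs, smul_eq_mul_unop]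
    rw [h2] at h1
    exact h1.symm
  · rw [codisjoint_iff, eq_top_iff]
    intro x _
    refine Submodule.mem_sup.2 ⟨a * x, mem_span_idem' a x, (1 - a) * x, mem_span_idem' _ x, ?_⟩
    noncomm_ring

open MulOpposite in
theorem stmt11 {R : Type*} [Ring R] {e : R} (he : IsIdempotentElem e)
    (hSSP : ∀ p q : Submodule Rᵐᵒᵖ R, IsSummand p → IsSummand q → IsSummand (p ⊔ q)) :
    letI : Ring (corner e) := cornerRing he
    ∀ f g : corner e, IsIdempotentElem f → IsIdempotentElem g →
      IsSummand (Submodule.span (corner e)ᵐᵒᵖ {f} ⊔ Submodule.span (corner e)ᵐᵒᵖ {g}) := by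
  letI : Ring (corner e) := cornerRing he
  intro f g hf hg
  obtain ⟨rf0, hfc⟩ := f.2
  obtain ⟨rg0, hgc⟩ := g.2
  have hef : e * (f : R) = f := by rw [hfc, ← mul_assoc, ← mul_assoc, he.eq]
  have hfe : (f : R) * e = f := by rw [hfc, mul_assoc, he.eq]
  have heg : e * (g : R) = g := by rw [hgc, ← mul_assoc, ← mul_assoc, he.eq]
  have hge : (g : R) * e = g := by rw [hgc, mul_assoc, he.eq]
  have hfidem : IsIdempotentElem (f : R) := congrArg Subtype.val hf
  have hgidem : IsIdempotentElem (g : R) := congrArg Subtype.val hg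
  set A : Submodule Rᵐᵒᵖ R :=
    Submodule.span Rᵐᵒᵖ {(f : R)} ⊔ Submodule.span Rᵐᵒᵖ {(g : R)} with hAdef
  obtain ⟨Q, hQ⟩ := hSSP _ _ (idem_summand hfidem) (idem_summand hgidem)
  have hAe : ∀ a ∈ A, e * a = a := by
    intro a haA
    obtain ⟨y, hy, z, hz, rfl⟩ := Submodule.mem_sup.1 haA
    obtain ⟨r, rfl⟩ := Submodule.mem_span_singleton.1 hy
    obtain ⟨s, rfl⟩ := Submodule.mem_span_singleton.1 hz
    rw [smul_eq_mul_unop, smul_eq_mul_unop, mul_add, ← mul_assoc, ← mul_assoc, hef, heg]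
  set p : Submodule (corner e)ᵐᵒᵖ (corner e) :=
    Submodule.span (corner e)ᵐᵒᵖ {f} ⊔ Submodule.span (corner e)ᵐᵒᵖ {g} with hpdef
  have hpA : ∀ x ∈ p, (x : R) ∈ A := by
    intro x hx
    obtain ⟨y, hy, z, hz, rfl⟩ := Submodule.mem_sup.1 hx
    obtain ⟨s, rfl⟩ := Submodule.mem_span_singleton.1 hy
    obtain ⟨t, rfl⟩ := Submodule.mem_span_singleton.1 hz
    have h1 : ((s • f + t • g : corner e) : R)
        = (f : R) * ((unop s : corner e) : R) + (g : R) * ((unop t : corner e) : R) := rfl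
    rw [h1]
    exact Submodule.add_mem _ (Submodule.mem_sup_left (mem_span_idem' _ _))
      (Submodule.mem_sup_right (mem_span_idem' _ _))
  refine ⟨{ carrier := {x : corner e | (x : R) ∈ Q}
            add_mem' := fun ha hb => Q.add_mem ha hb
            zero_mem' := Q.zero_mem
            smul_mem' := fun c x hx => ?_ }, ?_, ?_⟩
  · show ((c • x : corner e) : R) ∈ Q
    have h1 : ((c • x : corner e) : R) = (x : R) * ((unop c : corner e) : R) := rfl
    rw [h1, ← op_smul_eq_mul]
    exact Q.smul_mem _ hx
  · rw [Submodule.disjoint_def]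
    intro x hxp hxq
    have h0 : (x : R) = 0 := by
      have hd := hQ.1
      rw [Submodule.disjoint_def] at hd
      exact hd _ (hpA x hxp) hxq
    exact Subtype.ext h0
  · rw [codisjoint_iff, eq_top_iff]
    intro x _
    have hxA : (x : R) ∈ A ⊔ Q := hQ.2.eq_top ▸ Submodule.mem_top
    obtain ⟨a, haA, qv, hqv, hsum⟩ := Submodule.mem_sup.1 hxA
    have hea : e * a = a := hAe a haA
    have hxe : (x : R) * e = x := by
      obtain ⟨r, hr⟩ := x.2
      rw [hr, mul_assoc, he.eq]
    -- the element a * e of the corner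
    have haemem : ∃ r : R, a * e = e * r * e := ⟨a, by rw [hea]⟩
    set a' : corner e := ⟨a * e, haemem⟩ with ha'def
    -- a' belongs to p
    have ha'p : a' ∈ p := by
      obtain ⟨y, hy, z, hz, hyz⟩ := Submodule.mem_sup.1 haA
      obtain ⟨u, rfl⟩ := Submodule.mem_span_singleton.1 hy
      obtain ⟨v, rfl⟩ := Submodule.mem_span_singleton.1 hz
      set u' : corner e := ⟨e * unop u * e, unop u, rfl⟩ with hu'def
      set v' : corner e := ⟨e * unop v * e, unop v, rfl⟩ with hv'def
      have key : a' = f * u' + g * v' := by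
        apply Subtype.ext
        show a * e = (f : R) * (e * unop u * e) + (g : R) * (e * unop v * e)
        have h1 : (f : R) * (e * unop u * e) = (f : R) * unop u * e := by
          conv_rhs => rw [← hfe]
          noncomm_ring
        have h2 : (g : R) * (e * unop v * e) = (g : R) * unop v * e := by
          conv_rhs => rw [← hge]
          noncomm_ring
        rw [h1, h2, ← add_mul]
        congr 1
        rw [← hyz, smul_eq_mul_unop, smul_eq_mul_unop]
      rw [key]
      exact Submodule.add_mem _ (Submodule.mem_sup_left (mem_span_idem' _ _))
        (Submodule.mem_sup_right (mem_span_idem' _ _))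
    refine Submodule.mem_sup.2 ⟨a', ha'p, x - a', ?_, by abel⟩
    show ((x - a' : corner e) : R) ∈ Q
    have h2 : ((x - a' : corner e) : R) = (x : R) - a * e := rfl
    have h3 : (x : R) - a * e = qv * e := by
      have h4 : a * e + qv * e = (x : R) := by rw [← add_mul, hsum, hxe]
      rw [← h4]
      abel
    rw [h2, h3, ← op_smul_eq_mul]
    exact Q.smul_mem _ hqv
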